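/- arXiv:math/0511374 — 3 statements merged into one kernel-verified Lean document; each statement's English description precedes it below -/
import Mathlib

section
/- In a shortest word over {a_1,...,a_n} representing a given element of the Kiselman semigroup K_n, for each i ≤ ⌈n/2⌉ the letter a_i occurs at most 2^{i−1} times, and for each i ≥ ⌈(n+1)/2⌉ the letter a_i occurs at most 2^{n−i} times. -/
/-- The defining relations of the Kiselman semigroup `K_n`:
`aᵢ² = aᵢ`, and `aᵢaⱼaᵢ = aⱼaᵢaⱼ = aⱼaᵢ` for `i < j`. -/
inductive KisRel (n : ℕ) : FreeMonoid (Fin n) → FreeMonoid (Fin n) → Prop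
  | idem (i : Fin n) : KisRel n (.of i * .of i) (.of i)
  | braid₁ {i j : Fin n} (h : i < j) :
      KisRel n (.of i * .of j * .of i) (.of j * .of i)
  | braid₂ {i j : Fin n} (h : i < j) :
      KisRel n (.of j * .of i * .of j) (.of j * .of i)

/-- The Kiselman semigroup (monoid) `K_n`. -/
abbrev Kiselman (n : ℕ) := PresentedMonoid (KisRel n)

/-- The canonical projection from the free monoid on the generators to `K_n`. -/
def kmk (n : ℕ) : FreeMonoid (Fin n) →* Kiselman n := PresentedMonoid.mk (KisRel n)

/-- The generator `a_{i+1}` (0-indexed: `ka i` is the paper's `a_{i+1}`). -/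
def ka {n : ℕ} (i : Fin n) : Kiselman n := PresentedMonoid.of (KisRel n) i

/-- The idempotent `e_X`: the product of the generators indexed by `X` in strictly
decreasing order of indices. -/
def eX {n : ℕ} (X : Finset (Fin n)) : Kiselman n :=
  kmk n (FreeMonoid.ofList ((X.sort (· ≤ ·)).reverse))

/-! ### Auxiliary lemmas -/

private lemma ksound {n : ℕ} {a b : FreeMonoid (Fin n)} (h : KisRel n a b) :
    kmk n a = kmk n b :=
  Quotient.sound (ConGen.Rel.of _ _ h)

/-- If all letters of `u` are greater than `i`, then `a_i u a_i = u a_i` in `K_n`. -/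
private lemma kis_lemA {n : ℕ} (i : Fin n) :
    ∀ u : List (Fin n), (∀ j ∈ u, i < j) →
      kmk n (.of i * .ofList u * .of i) = kmk n (.ofList u * .of i)
  | [], _ => by
      simpa using ksound (KisRel.idem i)
  | j :: u, h => by
      have hij : i < j := h j List.mem_cons_self
      have ih := kis_lemA i u fun k hk => h k (List.mem_cons_of_mem _ hk)
      have ih' : kmk n (.of i) * (kmk n (.ofList u) * kmk n (.of i)) =
          kmk n (.ofList u) * kmk n (.of i) := by
        simpa [map_mul, mul_assoc] using ih
      have hb : kmk n (.of i) * kmk n (.of j) * kmk n (.of i) =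
          kmk n (.of j) * kmk n (.of i) := by
        simpa [map_mul] using ksound (KisRel.braid₁ hij)
      simp only [FreeMonoid.ofList_cons, map_mul, mul_assoc]
      rw [← ih', ← mul_assoc, ← mul_assoc, hb, mul_assoc, ih']

/-- If all letters of `u` are smaller than `i`, then `a_i u a_i = a_i u` in `K_n`. -/
private lemma kis_lemB {n : ℕ} (i : Fin n) :
    ∀ u : List (Fin n), (∀ j ∈ u, j < i) →
      kmk n (.of i * .ofList u * .of i) = kmk n (.of i * .ofList u)
  | [], _ => by
      simpa using ksound (KisRel.idem i)
  | j :: u, h => by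
      have hij : j < i := h j List.mem_cons_self
      have ih := kis_lemB i u fun k hk => h k (List.mem_cons_of_mem _ hk)
      have ih' : kmk n (.of i) * (kmk n (.ofList u) * kmk n (.of i)) =
          kmk n (.of i) * kmk n (.ofList u) := by
        simpa [map_mul, mul_assoc] using ih
      have hb : kmk n (.of i) * kmk n (.of j) * kmk n (.of i) =
          kmk n (.of i) * kmk n (.of j) := by
        simpa [map_mul] using ksound (KisRel.braid₂ hij)
      simp only [FreeMonoid.ofList_cons, map_mul, mul_assoc]
      rw [← mul_assoc, ← mul_assoc, ← hb, mul_assoc, mul_assoc, ih', ← mul_assoc, hb, mul_assoc]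

/-- In a shortest word, between two occurrences of `i` there must be a letter not above `i`. -/
private lemma kis_gapA {n : ℕ} {w : FreeMonoid (Fin n)}
    (hmin : ∀ v : FreeMonoid (Fin n), kmk n v = kmk n w → w.toList.length ≤ v.toList.length)
    {i : Fin n} {x u y : List (Fin n)} (hw : w.toList = x ++ i :: (u ++ i :: y))
    (hu : ∀ j ∈ u, i < j) : False := by
  have hw' : w = .ofList x * (.of i * .ofList u * .of i) * .ofList y := by
    apply FreeMonoid.toList.injective
    simp [FreeMonoid.toList_mul, hw]
  have e1 : kmk n (.ofList (x ++ (u ++ i :: y))) = kmk n w := by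
    rw [hw']
    simp only [map_mul, kis_lemA i u hu]
    simp [FreeMonoid.ofList_append, FreeMonoid.ofList_cons, map_mul, mul_assoc]
  have := hmin _ e1
  rw [hw] at this
  simp [FreeMonoid.toList_ofList] at this

/-- In a shortest word, between two occurrences of `i` there must be a letter not below `i`. -/
private lemma kis_gapB {n : ℕ} {w : FreeMonoid (Fin n)}
    (hmin : ∀ v : FreeMonoid (Fin n), kmk n v = kmk n w → w.toList.length ≤ v.toList.length)
    {i : Fin n} {x u y : List (Fin n)} (hw : w.toList = x ++ i :: (u ++ i :: y))
    (hu : ∀ j ∈ u, j < i) : False := by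
  have hw' : w = .ofList x * (.of i * .ofList u * .of i) * .ofList y := by
    apply FreeMonoid.toList.injective
    simp [FreeMonoid.toList_mul, hw]
  have e1 : kmk n (.ofList (x ++ i :: (u ++ y))) = kmk n w := by
    rw [hw']
    simp only [map_mul, kis_lemB i u hu]
    simp [FreeMonoid.ofList_append, FreeMonoid.ofList_cons, map_mul, mul_assoc]
  have := hmin _ e1
  rw [hw] at this
  simp [FreeMonoid.toList_ofList] at this

private lemma kis_first_split {α : Type*} [DecidableEq α] {i : α} :
    ∀ {l : List α}, i ∈ l → ∃ u z, l = u ++ i :: z ∧ i ∉ u := by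
  intro l h
  induction l with
  | nil => cases h
  | cons a t ih =>
    by_cases hai : a = i
    · exact ⟨[], t, by simp [hai], by simp⟩
    · have hit : i ∈ t := by
        rcases List.mem_cons.mp h with h1 | h1
        · exact absurd h1.symm hai
        · exact h1
      obtain ⟨u, z, he, hn⟩ := ih hit
      refine ⟨a :: u, z, by simp [he], ?_⟩
      simp only [List.mem_cons, not_or]
      exact ⟨fun h' => hai h'.symm, hn⟩

/-- If every gap between consecutive occurrences of `i` contains a letter satisfying `p`,
then the number of occurrences of `i` is at most `1 + countP p`. -/
private lemma kis_count_le {α : Type*} [DecidableEq α] (p : α → Bool) (i : α)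
    (hpi : p i = false) :
    ∀ (N : ℕ) (l : List α), l.length ≤ N →
      (∀ x u y : List α, l = x ++ i :: (u ++ i :: y) → i ∉ u → ∃ j ∈ u, p j = true) →
      l.count i ≤ 1 + l.countP p := by
  intro N
  induction N with
  | zero =>
    intro l hl _
    have : l = [] := List.length_eq_zero_iff.mp (Nat.le_zero.mp hl)
    simp [this]
  | succ N ih =>
    intro l hl H
    match l with
    | [] => simp
    | a :: t =>
      by_cases hai : a = i
      · subst hai
        by_cases hit : a ∈ t
        · obtain ⟨u, z, he, hn⟩ := kis_first_split hit
          subst he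
          obtain ⟨j, hju, hpj⟩ := H [] u z (by simp) hn
          have hlen : (a :: z).length ≤ N := by
            simp only [List.length_cons, List.length_append] at hl ⊢
            omega
          have H2 : ∀ x' u' y' : List α, a :: z = x' ++ a :: (u' ++ a :: y') → a ∉ u' →
              ∃ j ∈ u', p j = true := by
            intro x' u' y' heq hn'
            match x' with
            | [] =>
              simp only [List.nil_append, List.cons.injEq, true_and] at heq
              exact H (a :: u) u' y' (by simp [heq]) hn'
            | b :: x'' =>
              simp only [List.cons_append, List.cons.injEq] at heq
              exact H (a :: u ++ a :: x'') u' y'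
                (by simp [heq.2, List.append_assoc]) hn'
          have hrec := ih (a :: z) hlen H2
          have hcu : u.count a = 0 := List.count_eq_zero.mpr hn
          have hcp : 0 < u.countP p := List.countP_pos_iff.mpr ⟨j, hju, hpj⟩
          simp only [List.count_cons, List.count_append, List.countP_cons,
            List.countP_append, hpi, hcu, beq_self_eq_true, if_true,
            Bool.false_eq_true, if_false] at hrec ⊢
          omega
        · have h0 : t.count a = 0 := List.count_eq_zero.mpr hit
          simp [List.count_cons, h0]
      · have H' : ∀ x u y : List α, t = x ++ i :: (u ++ i :: y) → i ∉ u →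
            ∃ j ∈ u, p j = true := fun x u y heq hn => H (a :: x) u y (by simp [heq]) hn
        have ht : t.length ≤ N := by
          simp only [List.length_cons] at hl; omega
        have := ih t ht H'
        have hba : (a == i) = false := beq_eq_false_iff_ne.mpr hai
        simp only [List.count_cons, List.countP_cons, hba, Bool.false_eq_true, if_false]
        cases hpa : p a <;> simp <;> omega

private lemma kis_countP_split {n : ℕ} (f : Fin n → ℕ) (m : ℕ) (c : Fin n)
    (hc : ∀ j : Fin n, f j = m ↔ j = c) (l : List (Fin n)) :
    l.countP (fun j => decide (f j < m + 1)) =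
      l.countP (fun j => decide (f j < m)) + l.count c := by
  induction l with
  | nil => simp
  | cons a t ih =>
    simp only [List.countP_cons, List.count_cons, ih]
    by_cases hac : a = c
    · subst hac
      have hfa : f a = m := (hc a).mpr rfl
      simp [hfa]
      omega
    · have hfa : f a ≠ m := fun h => hac ((hc a).mp h)
      have h2 : decide (f a < m + 1) = decide (f a < m) := decide_eq_decide.mpr (by omega)
      have h3 : (a == c) = false := beq_eq_false_iff_ne.mpr hac
      simp [h2, h3]
      split_ifs <;> omega

private lemma kis_pow_bound {n : ℕ} (l : List (Fin n)) (f : Fin n → ℕ)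
    (hinj : ∀ j c : Fin n, f j = f c → j = c)
    (key : ∀ c : Fin n, l.count c ≤ 1 + l.countP (fun j => decide (f j < f c))) :
    ∀ m : ℕ, l.countP (fun j => decide (f j < m)) ≤ 2 ^ m - 1 := by
  intro m
  induction m with
  | zero => simp
  | succ m ih =>
    by_cases hm : ∃ c : Fin n, f c = m
    · obtain ⟨c, hcm⟩ := hm
      have hcc : ∀ j, f j = m ↔ j = c :=
        fun j => ⟨fun h => hinj j c (h.trans hcm.symm), fun h => h ▸ hcm⟩
      rw [kis_countP_split f m c hcc]
      have h1 := key c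
      rw [hcm] at h1
      have h2 : 1 ≤ 2 ^ m := Nat.one_le_two_pow
      have h3 : 2 ^ (m + 1) = 2 ^ m * 2 := pow_succ 2 m
      omega
    · push_neg at hm
      have he : l.countP (fun j => decide (f j < m + 1)) =
          l.countP (fun j => decide (f j < m)) := by
        apply List.countP_congr
        intro a _
        simp only [decide_eq_true_eq]
        have := hm a
        omega
      have h2 : 1 ≤ 2 ^ m := Nat.one_le_two_pow
      have h3 : 2 ^ (m + 1) = 2 ^ m * 2 := pow_succ 2 m
      omega

private lemma kis_count_le_pow {n : ℕ} (l : List (Fin n)) (f : Fin n → ℕ)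
    (hinj : ∀ j c : Fin n, f j = f c → j = c)
    (key : ∀ c : Fin n, l.count c ≤ 1 + l.countP (fun j => decide (f j < f c)))
    (c : Fin n) : l.count c ≤ 2 ^ (f c) := by
  have h1 := key c
  have h2 := kis_pow_bound l f hinj key (f c)
  have h3 : 1 ≤ 2 ^ (f c) := Nat.one_le_two_pow
  omega

/-- In a shortest word representing an element of `K_n`, the letter `a_{i+1}` (0-indexed
`i : Fin n`, 1-indexed index `i+1`) occurs at most `2^i` times when `i+1 ≤ ⌈n/2⌉`, and
at most `2^{n-(i+1)}` times when `i+1 ≥ ⌈(n+1)/2⌉`. -/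
theorem kiselman_shortest_word_counts (n : ℕ) (x : Kiselman n) (w : FreeMonoid (Fin n))
    (hwx : kmk n w = x)
    (hmin : ∀ v : FreeMonoid (Fin n), kmk n v = x → w.toList.length ≤ v.toList.length)
    (i : Fin n) :
    ((i : ℕ) + 1 ≤ (n + 1) / 2 → w.toList.count i ≤ 2 ^ (i : ℕ)) ∧
    ((n + 2) / 2 ≤ (i : ℕ) + 1 → w.toList.count i ≤ 2 ^ (n - ((i : ℕ) + 1))) := by
  have hmin' : ∀ v : FreeMonoid (Fin n), kmk n v = kmk n w →
      w.toList.length ≤ v.toList.length := fun v hv => hmin v (by rw [hv, hwx])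
  -- bound 1 : count i ≤ 2 ^ i
  have key1 : ∀ c : Fin n, w.toList.count c ≤
      1 + w.toList.countP (fun j : Fin n => decide ((j : ℕ) < (c : ℕ))) := by
    intro c
    apply kis_count_le _ c (by simp) w.toList.length w.toList le_rfl
    intro xx u y hw hn
    by_contra hc
    push_neg at hc
    refine kis_gapA hmin' hw fun j hj => ?_
    have h1 := hc j hj
    simp only [ne_eq, decide_eq_true_eq] at h1
    have h4 : (j : ℕ) ≠ (c : ℕ) := fun h => hn (Fin.eq_of_val_eq h ▸ hj)
    exact Fin.lt_def.mpr (by omega)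
  have bound1 : w.toList.count i ≤ 2 ^ (i : ℕ) :=
    kis_count_le_pow w.toList (fun j : Fin n => (j : ℕ))
      (fun j c h => Fin.eq_of_val_eq h) key1 i
  -- bound 2 : count i ≤ 2 ^ (n - 1 - i)
  have key2 : ∀ c : Fin n, w.toList.count c ≤
      1 + w.toList.countP (fun j : Fin n => decide (n - 1 - (j : ℕ) < n - 1 - (c : ℕ))) := by
    intro c
    apply kis_count_le _ c (by simp) w.toList.length w.toList le_rfl
    intro xx u y hw hn
    by_contra hc
    push_neg at hc
    refine kis_gapB hmin' hw fun j hj => ?_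
    have h1 := hc j hj
    simp only [ne_eq, decide_eq_true_eq] at h1
    have h4 : (j : ℕ) ≠ (c : ℕ) := fun h => hn (Fin.eq_of_val_eq h ▸ hj)
    have hj' := j.isLt
    have hc' := c.isLt
    exact Fin.lt_def.mpr (by omega)
  have bound2 : w.toList.count i ≤ 2 ^ (n - 1 - (i : ℕ)) :=
    kis_count_le_pow w.toList (fun j : Fin n => n - 1 - (j : ℕ))
      (fun j c h => Fin.eq_of_val_eq (by
        have h' : n - 1 - (j : ℕ) = n - 1 - (c : ℕ) := h
        have hj' := j.isLt; have hc' := c.isLt; omega)) key2 i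
  have hexp : n - ((i : ℕ) + 1) = n - 1 - (i : ℕ) := by omega
  exact ⟨fun _ => bound1, fun _ => by rw [hexp]; exact bound2⟩
end

section
/- For every subset X = {i_1 > i_2 > ... > i_k} of {1,...,n}, the element e_X = a_{i_1} a_{i_2} ··· a_{i_k} (product in strictly decreasing order of indices, with e_∅ the identity) is an idempotent of the Kiselman semigroup K_n; moreover every idempotent of K_n equals e_X for some subset X, so K_n has exactly 2^n idempotents. -/
def KP {n : ℕ} (l : List (Fin n)) : Kiselman n := kmk n (FreeMonoid.ofList l)

lemma krel {n : ℕ} {x y : FreeMonoid (Fin n)} (h : KisRel n x y) : kmk n x = kmk n y :=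
  Quotient.sound (ConGen.Rel.of _ _ h)

lemma KP_nil {n : ℕ} : KP ([] : List (Fin n)) = 1 := rfl
lemma ka_eq {n : ℕ} (i : Fin n) : ka i = KP [i] := rfl
lemma KP_append {n : ℕ} (l₁ l₂ : List (Fin n)) : KP (l₁ ++ l₂) = KP l₁ * KP l₂ := by
  unfold KP; rw [← map_mul]; rfl
lemma KP_cons {n : ℕ} (i : Fin n) (l : List (Fin n)) : KP (i :: l) = ka i * KP l := by
  rw [ka_eq, ← KP_append]; rfl

lemma r1 {n : ℕ} (i : Fin n) : ka i * ka i = ka i := krel (.idem i)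
lemma r2 {n : ℕ} {i j : Fin n} (h : i < j) : ka i * ka j * ka i = ka j * ka i := krel (.braid₁ h)
lemma r3 {n : ℕ} {i j : Fin n} (h : i < j) : ka j * ka i * ka j = ka j * ka i := krel (.braid₂ h)

lemma lemC {n : ℕ} (j : Fin n) : ∀ l : List (Fin n), (∀ x ∈ l, x < j) →
    ka j * KP l * ka j = ka j * KP l
  | [], _ => by simp [KP_nil, r1]
  | i :: l, h => by
    have hi : i < j := h i (by simp)
    have IH := lemC j l (fun x hx => h x (by simp [hx]))
    rw [KP_cons]
    calc ka j * (ka i * KP l) * ka j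
        = (ka j * ka i * ka j) * KP l * ka j := by rw [r3 hi]; group
      _ = (ka j * ka i) * (ka j * KP l * ka j) := by group
      _ = (ka j * ka i) * (ka j * KP l) := by rw [IH]
      _ = (ka j * ka i * ka j) * KP l := by group
      _ = ka j * (ka i * KP l) := by rw [r3 hi]; group

lemma lemD {n : ℕ} (i : Fin n) : ∀ l : List (Fin n), (∀ x ∈ l, i < x) →
    ka i * KP l * ka i = KP l * ka i
  | [], _ => by simp [KP_nil, r1]
  | j :: l, h => by
    have hj : i < j := h j (by simp)
    have IH := lemD i l (fun x hx => h x (by simp [hx]))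
    rw [KP_cons]
    calc ka i * (ka j * KP l) * ka i
        = (ka i * ka j) * (KP l * ka i) := by group
      _ = (ka i * ka j) * (ka i * KP l * ka i) := by rw [IH]
      _ = (ka i * ka j * ka i) * (KP l * ka i) := by group
      _ = (ka j * ka i) * (KP l * ka i) := by rw [r2 hj]
      _ = ka j * (ka i * KP l * ka i) := by group
      _ = ka j * (KP l * ka i) := by rw [IH]
      _ = (ka j * KP l) * ka i := by group

lemma idem_desc {n : ℕ} : ∀ l : List (Fin n), l.Pairwise (· > ·) → KP l * KP l = KP l
  | [], _ => by simp [KP_nil]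
  | j :: l, h => by
    rw [List.pairwise_cons] at h
    have IH := idem_desc l h.2
    have hC := lemC j l (fun x hx => h.1 x hx)
    rw [KP_cons]
    calc (ka j * KP l) * (ka j * KP l)
        = (ka j * KP l * ka j) * KP l := by group
      _ = (ka j * KP l) * KP l := by rw [hC]
      _ = ka j * (KP l * KP l) := by group
      _ = ka j * KP l := by rw [IH]

lemma zero_right {n : ℕ} {l : List (Fin n)} (hs : l.Pairwise (· > ·)) {i : Fin n} (hi : i ∈ l) :
    KP l * ka i = KP l := by
  obtain ⟨A, B, rfl⟩ := List.append_of_mem hi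
  rw [List.pairwise_append] at hs
  have hB : ∀ x ∈ B, x < i := fun x hx => (List.pairwise_cons.1 hs.2.1).1 x hx
  have hC := lemC i B hB
  rw [KP_append, KP_cons]
  calc KP A * (ka i * KP B) * ka i = KP A * (ka i * KP B * ka i) := by group
    _ = KP A * (ka i * KP B) := by rw [hC]

lemma zero_left {n : ℕ} {l : List (Fin n)} (hs : l.Pairwise (· > ·)) {i : Fin n} (hi : i ∈ l) :
    ka i * KP l = KP l := by
  obtain ⟨A, B, rfl⟩ := List.append_of_mem hi
  rw [List.pairwise_append] at hs
  have hA : ∀ x ∈ A, i < x := fun x hx => hs.2.2 x hx i (by simp)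
  have hD := lemD i A hA
  rw [KP_append, KP_cons]
  calc ka i * (KP A * (ka i * KP B)) = (ka i * KP A * ka i) * KP B := by group
    _ = (KP A * ka i) * KP B := by rw [hD]
    _ = KP A * (ka i * KP B) := by group

lemma absorb_right {n : ℕ} {l : List (Fin n)} (hs : l.Pairwise (· > ·)) :
    ∀ u : List (Fin n), (∀ x ∈ u, x ∈ l) → KP l * KP u = KP l
  | [], _ => by simp [KP_nil]
  | x :: u, h => by
    rw [KP_cons, ← mul_assoc, zero_right hs (h x (by simp)),
      absorb_right hs u (fun y hy => h y (by simp [hy]))]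

lemma absorb_left {n : ℕ} {l : List (Fin n)} (hs : l.Pairwise (· > ·)) :
    ∀ u : List (Fin n), (∀ x ∈ u, x ∈ l) → KP u * KP l = KP l
  | [], _ => by simp [KP_nil]
  | x :: u, h => by
    rw [KP_cons, mul_assoc, absorb_left hs u (fun y hy => h y (by simp [hy])),
      zero_left hs (h x (by simp))]


lemma eX_eq {n : ℕ} (X : Finset (Fin n)) : eX X = KP ((X.sort (· ≤ ·)).reverse) := rfl

lemma desc_sorted {n : ℕ} (X : Finset (Fin n)) : ((X.sort (· ≤ ·)).reverse).Pairwise (· > ·) := by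
  rw [List.pairwise_reverse]
  exact (Finset.sortedLT_sort X).pairwise

lemma mem_desc {n : ℕ} {X : Finset (Fin n)} {x : Fin n} :
    x ∈ (X.sort (· ≤ ·)).reverse ↔ x ∈ X := by simp

lemma eX_cons_max {n : ℕ} {X : Finset (Fin n)} (hX : X.Nonempty) :
    eX X = ka (X.max' hX) * eX (X.erase (X.max' hX)) := by
  set m := X.max' hX with hm
  have key : X.sort (· ≤ ·) = ((X.erase m).sort (· ≤ ·)) ++ [m] := by
    refine (fun hp hs => List.Perm.eq_of_pairwise' (Finset.pairwise_sort _ _) hs hp) ?_ ?_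
    · rw [List.perm_ext_iff_of_nodup (Finset.sort_nodup _ _)]
      · intro a
        simp only [Finset.mem_sort, List.mem_append, List.mem_singleton, Finset.mem_erase]
        constructor
        · intro ha
          by_cases h : a = m
          · exact Or.inr h
          · exact Or.inl ⟨h, ha⟩
        · rintro (⟨-, ha⟩ | rfl)
          · exact ha
          · exact X.max'_mem hX
      · refine List.Nodup.append (Finset.sort_nodup _ _) (List.nodup_singleton m) ?_
        intro a ha hb
        simp only [List.mem_singleton] at hb
        subst hb
        simp only [Finset.mem_sort, Finset.mem_erase] at ha
        exact ha.1 rfl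
    · rw [List.pairwise_append]
      refine ⟨Finset.pairwise_sort _ _, List.pairwise_singleton _ m, ?_⟩
      intro a ha b hb
      simp only [List.mem_singleton] at hb
      subst hb
      simp only [Finset.mem_sort, Finset.mem_erase] at ha
      exact X.le_max' a ha.2
  rw [eX_eq, eX_eq, key]
  rw [List.reverse_append]
  simp only [List.reverse_singleton, List.singleton_append]
  rw [KP_cons]

/-! ### Support homomorphism -/

structure USet (n : ℕ) where s : Finset (Fin n)

lemma USet.ext' {n : ℕ} {a b : USet n} (h : a.s = b.s) : a = b := by cases a; cases b; simpa using h

instance {n : ℕ} : Monoid (USet n) where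
  mul a b := ⟨a.s ∪ b.s⟩
  one := ⟨∅⟩
  mul_assoc a b c := USet.ext' (Finset.union_assoc _ _ _)
  one_mul a := USet.ext' (Finset.empty_union _)
  mul_one a := USet.ext' (Finset.union_empty _)

lemma USet.mul_def {n : ℕ} (a b : USet n) : a * b = ⟨a.s ∪ b.s⟩ := rfl

def suppHom {n : ℕ} : Kiselman n →* USet n :=
  PresentedMonoid.lift (fun i => ⟨{i}⟩) (by
    intro a b h
    apply USet.ext'
    cases h <;>
      first
      | (simp [USet.mul_def]; done)
      | (simp [USet.mul_def]; ext x; simp; tauto))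

lemma suppHom_ka {n : ℕ} (i : Fin n) : suppHom (ka i) = ⟨{i}⟩ := rfl

lemma suppHom_KP {n : ℕ} : ∀ l : List (Fin n), suppHom (KP l) = ⟨l.toFinset⟩
  | [] => by apply USet.ext'; show (∅ : Finset (Fin n)) = _; simp
  | i :: l => by
    rw [KP_cons, map_mul, suppHom_ka, suppHom_KP l, USet.mul_def]
    apply USet.ext'
    simp [Finset.insert_eq, -Finset.singleton_union]

lemma suppHom_eX {n : ℕ} (X : Finset (Fin n)) : suppHom (eX X) = ⟨X⟩ := by
  rw [eX_eq, suppHom_KP]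
  apply USet.ext'
  ext x
  simp

lemma eX_injective {n : ℕ} : Function.Injective (eX (n := n)) := by
  intro X Y h
  have := congrArg suppHom h
  rw [suppHom_eX, suppHom_eX] at this
  exact congrArg USet.s this

/-! ### Power lemmas -/

lemma pow_list {n : ℕ} (l : List (Fin n)) : ∀ k, (KP l)^k = KP ((List.replicate k l).flatten)
  | 0 => by simp [KP_nil]
  | k + 1 => by
    rw [pow_succ', pow_list l k, List.replicate_succ, List.flatten_cons, KP_append]

lemma pow_absorb {M : Type*} [Monoid M] {b z : M} (h : ∀ j : ℕ, b * z^j * b = b * z^j) :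
    ∀ k : ℕ, b * (z*b)^k = b * z^k
  | 0 => by simp
  | k + 1 => by
    calc b * (z*b)^(k+1) = (b * (z*b)^k) * (z*b) := by rw [pow_succ]; group
      _ = (b * z^k) * (z * b) := by rw [pow_absorb h k]
      _ = b * z^(k+1) * b := by rw [pow_succ]; group
      _ = b * z^(k+1) := h (k+1)

lemma kconj_pow {M : Type*} [Monoid M] (x y : M) : ∀ k : ℕ, (x*y)^(k+1) = x*(y*x)^k*y
  | 0 => by simp
  | k + 1 => by
    calc (x*y)^(k+2) = (x*y) * (x*y)^(k+1) := by rw [pow_succ']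
      _ = (x*y) * (x*(y*x)^k*y) := by rw [kconj_pow x y k]
      _ = x*((y*x)*(y*x)^k)*y := by group
      _ = x*(y*x)^(k+1)*y := by rw [pow_succ']

lemma split_first {α : Type*} {m : α} : ∀ {l : List α}, m ∈ l → ∃ p q, l = p ++ m :: q ∧ m ∉ p
  | [], h => absurd h (List.not_mem_nil (a := m))
  | a :: l, h => by
    by_cases ha : a = m
    · exact ⟨[], l, by simp [ha], List.not_mem_nil (a := m)⟩
    · have hm : m ∈ l := by
        rcases List.mem_cons.1 h with h' | h'
        · exact absurd h'.symm ha
        · exact h'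
      obtain ⟨p, q, rfl, hp⟩ := split_first hm
      exact ⟨a :: p, q, rfl, by simp [hp, Ne.symm ha]⟩

lemma eX_empty {n : ℕ} : eX (∅ : Finset (Fin n)) = 1 := by
  rw [eX_eq]
  simp only [Finset.sort_empty, List.reverse_nil]
  exact KP_nil

lemma main_nil {n : ℕ} : ∃ N : ℕ, (KP ([] : List (Fin n)))^(N+1) = eX ([] : List (Fin n)).toFinset :=
  ⟨0, by simp [KP_nil, eX_empty]⟩

lemma main {n : ℕ} : ∀ (s c : ℕ) (w : List (Fin n)), w.toFinset.card ≤ s → w.length ≤ c →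
    ∃ N : ℕ, (KP w)^(N+1) = eX w.toFinset := by
  intro s
  induction s with
  | zero =>
    intro c w hcard _
    have hw : w = [] := by
      have h0 : w.toFinset = ∅ := Finset.card_eq_zero.1 (le_antisymm hcard (Nat.zero_le _))
      simpa using h0
    subst hw; exact main_nil
  | succ s IHs =>
    intro c
    induction c with
    | zero =>
      intro w _ hlen
      have hw : w = [] := List.eq_nil_of_length_eq_zero (le_antisymm hlen (Nat.zero_le _))
      subst hw; exact main_nil
    | succ c IHc =>
      intro w hcard hlen
      rcases eq_or_ne w [] with rfl | hwne
      · exact main_nil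
      have hne : w.toFinset.Nonempty := by
        rw [Finset.nonempty_iff_ne_empty]
        simpa using hwne
      set X := w.toFinset with hX
      set m := X.max' hne with hm
      have hmw : m ∈ w := List.mem_toFinset.1 (X.max'_mem hne)
      have hle : ∀ x ∈ w, x ≤ m := fun x hx => X.le_max' x (List.mem_toFinset.2 hx)
      obtain ⟨p, t, hw_eq, hp⟩ := split_first hmw
      by_cases hmt : m ∈ t
      · -- at least two occurrences of m: collapse one
        obtain ⟨r, q, ht_eq, hr⟩ := split_first hmt
        set w' := p ++ m :: (r ++ q) with hw'
        have hrlt : ∀ x ∈ r, x < m := by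
          intro x hx
          refine lt_of_le_of_ne (hle x ?_) (fun e => hr (e ▸ hx))
          rw [hw_eq, ht_eq]; simp [hx]
        have hCr : ka m * KP r * ka m = ka m * KP r := lemC m r hrlt
        have hKP : KP w = KP w' := by
          rw [hw_eq, ht_eq, hw']
          rw [KP_append, KP_cons, KP_append, KP_cons, KP_append, KP_cons]
          calc KP p * (ka m * (KP r * (ka m * KP q)))
              = KP p * ((ka m * KP r * ka m) * KP q) := by group
            _ = KP p * ((ka m * KP r) * KP q) := by rw [hCr]
            _ = KP p * (ka m * (KP r * KP q)) := by group
        have hfin : w'.toFinset = X := by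
          rw [hX, hw_eq, ht_eq, hw']
          ext a
          simp only [List.toFinset_append, List.toFinset_cons, Finset.mem_union,
            Finset.mem_insert]
          tauto
        have hlen' : w'.length ≤ c := by
          rw [hw_eq, ht_eq] at hlen
          rw [hw']
          simp only [List.length_append, List.length_cons] at *
          omega
        obtain ⟨N, hN⟩ := IHc w' (by rw [hfin]; exact hcard) hlen'
        refine ⟨N, ?_⟩
        rw [hKP, hN, hfin]
      · -- exactly one occurrence of m
        have hYlt : ∀ x ∈ t ++ p, x < m := by
          intro x hx
          rcases List.mem_append.1 hx with h' | h'
          · exact lt_of_le_of_ne (hle x (by rw [hw_eq]; simp [h'])) (fun e => hmt (e ▸ h'))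
          · exact lt_of_le_of_ne (hle x (by rw [hw_eq]; simp [h'])) (fun e => hp (e ▸ h'))
        set Y := (t ++ p).toFinset with hYdef
        have hY : Y = X.erase m := by
          rw [hYdef, hX, hw_eq]
          ext a
          simp only [List.toFinset_append, List.toFinset_cons, Finset.mem_union,
            Finset.mem_insert, Finset.mem_erase, List.mem_toFinset]
          constructor
          · rintro (h' | h')
            · exact ⟨fun e => hmt (e ▸ h'), Or.inr (Or.inr h')⟩
            · exact ⟨fun e => hp (e ▸ h'), Or.inl h'⟩
          · rintro ⟨hne', (h' | h' | h')⟩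
            · exact Or.inr h'
            · exact absurd h' hne'
            · exact Or.inl h'
        have hcardY : Y.card ≤ s := by
          rw [hY]
          have h1 : (X.erase m).card = X.card - 1 :=
            Finset.card_erase_of_mem (by rw [hm]; exact X.max'_mem hne)
          omega
        obtain ⟨N, hN⟩ := IHs (t ++ p).length (t ++ p) hcardY le_rfl
        set z := KP (t ++ p) with hz
        have hC : ∀ j : ℕ, ka m * z^j * ka m = ka m * z^j := by
          intro j
          rw [hz, pow_list]
          apply lemC
          intro x hx
          rw [List.mem_flatten] at hx
          obtain ⟨l', hl', hxl'⟩ := hx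
          rw [List.mem_replicate] at hl'
          exact hYlt x (hl'.2 ▸ hxl')
        have hmax : eX X = ka m * eX (X.erase m) := eX_cons_max hne
        have habs : KP p * eX X * KP t = eX X := by
          rw [eX_eq X]
          rw [absorb_left (desc_sorted X) p
            (fun x hx => mem_desc.2 (by rw [hX, hw_eq]; simp [hx]))]
          rw [absorb_right (desc_sorted X) t
            (fun x hx => mem_desc.2 (by rw [hX, hw_eq]; simp [hx]))]
        refine ⟨N + 1, ?_⟩
        have e0 : KP w = (KP p * ka m) * KP t := by
          rw [hw_eq, KP_append, KP_cons]; group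
        calc (KP w)^(N+2) = ((KP p * ka m) * KP t)^(N+2) := by rw [e0]
          _ = (KP p * ka m) * (KP t * (KP p * ka m))^(N+1) * KP t := kconj_pow _ _ (N+1)
          _ = KP p * (ka m * (z * ka m)^(N+1)) * KP t := by
              rw [show KP t * (KP p * ka m) = z * ka m by rw [hz, KP_append]; group]
              group
          _ = KP p * (ka m * z^(N+1)) * KP t := by rw [pow_absorb hC]
          _ = KP p * (ka m * eX Y) * KP t := by rw [hN]
          _ = KP p * eX X * KP t := by rw [hY, ← hmax]
          _ = eX X := habs


/-- Proposition 2: each `e_X` is an idempotent of `K_n`, every idempotent equals some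
`e_X`, and `K_n` has exactly `2^n` idempotents. -/
theorem kiselman_idempotents (n : ℕ) :
    (∀ X : Finset (Fin n), IsIdempotentElem (eX X)) ∧
    (∀ f : Kiselman n, IsIdempotentElem f → ∃ X : Finset (Fin n), f = eX X) ∧
    Nat.card {f : Kiselman n // IsIdempotentElem f} = 2 ^ n := by
  have part1 : ∀ X : Finset (Fin n), IsIdempotentElem (eX X) := fun X => by
    rw [IsIdempotentElem, eX_eq]
    exact idem_desc _ (desc_sorted X)
  have part2 : ∀ f : Kiselman n, IsIdempotentElem f → ∃ X : Finset (Fin n), f = eX X := by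
    intro f hf
    obtain ⟨a, rfl⟩ := PresentedMonoid.surjective_mk f
    set w := FreeMonoid.toList a with hwa
    have hKP : KP w = PresentedMonoid.mk (KisRel n) a := by
      show kmk n (FreeMonoid.ofList (FreeMonoid.toList a)) = _
      rw [FreeMonoid.ofList_toList]
      rfl
    obtain ⟨N, hN⟩ := main w.toFinset.card w.length w le_rfl le_rfl
    refine ⟨w.toFinset, ?_⟩
    calc PresentedMonoid.mk (KisRel n) a
        = (PresentedMonoid.mk (KisRel n) a) ^ (N + 1) := (hf.pow_succ_eq N).symm
      _ = (KP w) ^ (N + 1) := by rw [hKP]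
      _ = eX w.toFinset := hN
  refine ⟨part1, part2, ?_⟩
  have hbij : Function.Bijective
      (fun X : Finset (Fin n) => (⟨eX X, part1 X⟩ : {f : Kiselman n // IsIdempotentElem f})) := by
    constructor
    · intro X Y h
      exact eX_injective (congrArg Subtype.val h)
    · rintro ⟨f, hf⟩
      obtain ⟨X, hX⟩ := part2 f hf
      exact ⟨X, Subtype.ext hX.symm⟩
  rw [Nat.card_congr (Equiv.ofBijective _ hbij).symm]
  simp [Nat.card_eq_fintype_card]
end

section
/- The only monoid automorphism of the Kiselman semigroup K_n is the identity, and the map a_i ↦ a_{n−i+1} extends uniquely to an anti-automorphism of K_n, which is the unique anti-automorphism of K_n. -/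
/-! ### Auxiliary development -/

namespace KisAux

variable {n : ℕ}

lemma kmk_rel {a b : FreeMonoid (Fin n)} (h : KisRel n a b) : kmk n a = kmk n b :=
  Quotient.sound (ConGen.Rel.of a b h)

lemma kmk_of (i : Fin n) : kmk n (FreeMonoid.of i) = ka i := rfl

lemma ka_idem (i : Fin n) : ka i * ka i = ka i := by
  simpa [map_mul, kmk_of] using kmk_rel (KisRel.idem i)

lemma ka_braid₁ {i j : Fin n} (h : i < j) : ka i * ka j * ka i = ka j * ka i := by
  simpa [map_mul, kmk_of] using kmk_rel (KisRel.braid₁ h)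

lemma ka_braid₂ {i j : Fin n} (h : i < j) : ka j * ka i * ka j = ka j * ka i := by
  simpa [map_mul, kmk_of] using kmk_rel (KisRel.braid₂ h)

/-! #### The content homomorphism -/

/-- Type synonym for `Finset (Fin n)` regarded as a monoid under union. -/
def CM (n : ℕ) := Finset (Fin n)

instance : CommMonoid (CM n) where
  mul a b := (a ∪ b : Finset (Fin n))
  one := (∅ : Finset (Fin n))
  mul_assoc := Finset.union_assoc
  one_mul := Finset.empty_union
  mul_one := Finset.union_empty
  mul_comm := Finset.union_comm

def cmOf (s : Finset (Fin n)) : CM n := s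
def toFS (s : CM n) : Finset (Fin n) := s
def genCM (i : Fin n) : CM n := cmOf {i}

lemma cmOf_inj {s t : Finset (Fin n)} (h : cmOf s = cmOf t) : s = t := h

lemma cm_mul (s t : Finset (Fin n)) : cmOf s * cmOf t = cmOf (s ∪ t) := rfl

lemma content_rel : ∀ a b : FreeMonoid (Fin n), KisRel n a b →
    FreeMonoid.lift genCM a = FreeMonoid.lift genCM b := by
  intro a b h
  cases h <;> simp only [map_mul, FreeMonoid.lift_eval_of, genCM, cm_mul] <;>
    apply congrArg cmOf <;> ext a <;> simp <;> tauto

def content : Kiselman n →* CM n :=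
  PresentedMonoid.lift genCM content_rel

lemma content_kmk (l : List (Fin n)) :
    content (kmk n (FreeMonoid.ofList l)) = cmOf l.toFinset := by
  induction l with
  | nil => rfl
  | cons a l ih =>
    rw [FreeMonoid.ofList_cons, map_mul, map_mul]
    show content (kmk n (FreeMonoid.of a)) * content (kmk n (FreeMonoid.ofList l)) = _
    rw [ih]
    show genCM a * cmOf l.toFinset = _
    rw [genCM, cm_mul]
    apply congrArg cmOf
    simp [List.toFinset_cons, Finset.insert_eq, -Finset.singleton_union]

lemma content_ka (i : Fin n) : content (ka i) = genCM i := rfl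

lemma eq_one_of_content (x : Kiselman n) (h : content x = 1) : x = 1 := by
  obtain ⟨w, rfl⟩ := PresentedMonoid.surjective_mk (rels := KisRel n) x
  have h2 : content (kmk n (FreeMonoid.ofList (FreeMonoid.toList w))) = 1 := h
  rw [content_kmk] at h2
  have hl : (FreeMonoid.toList w).toFinset = (∅ : Finset (Fin n)) := cmOf_inj h2
  have hw : w = 1 := by
    have h3 : FreeMonoid.toList w = [] := by
      cases hw : FreeMonoid.toList w with
      | nil => rfl
      | cons a l => rw [hw] at hl; simp at hl
    have := congrArg FreeMonoid.ofList h3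
    rwa [FreeMonoid.ofList_toList] at this
  rw [hw]
  exact map_one (PresentedMonoid.mk (KisRel n))

lemma ka_ne_one (i : Fin n) : ka i ≠ 1 := by
  intro h
  have h2 := congrArg content h
  rw [content_ka, map_one] at h2
  have h3 : ({i} : Finset (Fin n)) = (∅ : Finset (Fin n)) := cmOf_inj h2
  simp at h3

lemma ka_inj {i j : Fin n} (h : ka i = ka j) : i = j := by
  have h2 := congrArg content h
  rw [content_ka, content_ka] at h2
  exact Finset.singleton_injective (cmOf_inj h2)

/-! #### Words in a single letter -/

lemma kmk_const {l : List (Fin n)} {i : Fin n} (hne : l ≠ []) (h : ∀ a ∈ l, a = i) :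
    kmk n (FreeMonoid.ofList l) = ka i := by
  induction l with
  | nil => exact absurd rfl hne
  | cons a l ih =>
    have ha : a = i := h a (by simp)
    cases l with
    | nil => rw [ha]; rfl
    | cons b m =>
      rw [FreeMonoid.ofList_cons, map_mul,
        ih (by simp) (fun x hx => h x (List.mem_cons_of_mem a hx)), kmk_of, ha, ka_idem]

lemma eq_ka_of_content {u : Kiselman n} {i : Fin n} (h : content u = genCM i) : u = ka i := by
  obtain ⟨w, rfl⟩ := PresentedMonoid.surjective_mk (rels := KisRel n) u
  have h2 : content (kmk n (FreeMonoid.ofList (FreeMonoid.toList w))) = genCM i := h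
  rw [content_kmk] at h2
  have hl : (FreeMonoid.toList w).toFinset = ({i} : Finset (Fin n)) := cmOf_inj h2
  have hne : FreeMonoid.toList w ≠ [] := by
    intro h0; rw [h0] at hl
    exact (Finset.singleton_ne_empty i) hl.symm
  have hmem : ∀ a ∈ FreeMonoid.toList w, a = i := by
    intro a ha
    have : a ∈ (FreeMonoid.toList w).toFinset := List.mem_toFinset.2 ha
    rw [hl] at this; simpa using this
  exact kmk_const hne hmem

/-! #### Generators are the indecomposable elements -/

def IsGen (x : Kiselman n) : Prop := ∃ i, x = ka i

lemma gen_decomp {i : Fin n} {u v : Kiselman n} (h : ka i = u * v) : u = ka i ∨ v = ka i := by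
  have hc := congrArg content h
  rw [content_ka, map_mul] at hc
  have hcu : cmOf (content u) * cmOf (content v) = genCM i := hc.symm
  replace hcu : cmOf (toFS (content u) ∪ toFS (content v)) = genCM i := hcu
  have hcu' : toFS (content u) ∪ toFS (content v) = ({i} : Finset (Fin n)) :=
    cmOf_inj hcu
  by_cases h0 : toFS (content u) = (∅ : Finset (Fin n))
  · right
    have hu1 : u = 1 := eq_one_of_content u h0
    rw [hu1, one_mul] at h
    exact h.symm
  · left
    apply eq_ka_of_content
    have hsub : toFS (content u) ⊆ {i} := by
      rw [← hcu']; exact Finset.subset_union_left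
    rcases Finset.subset_singleton_iff.1 hsub with h1 | h1
    · exact absurd h1 h0
    · exact h1

lemma isGen_of_prop {x : Kiselman n} (hx : x ≠ 1)
    (hp : ∀ u v : Kiselman n, x = u * v → u = x ∨ v = x) : IsGen x := by
  set S : Set ℕ := {k | ∃ l : List (Fin n), kmk n (FreeMonoid.ofList l) = x ∧ l.length = k}
    with hS
  have hSne : S.Nonempty := by
    obtain ⟨w, rfl⟩ := PresentedMonoid.surjective_mk (rels := KisRel n) x
    exact ⟨(FreeMonoid.toList w).length, FreeMonoid.toList w, rfl, rfl⟩
  obtain ⟨l, hl, hlen⟩ := Nat.sInf_mem hSne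
  cases l with
  | nil =>
    exfalso
    rw [FreeMonoid.ofList_nil, map_one] at hl
    exact hx hl.symm
  | cons c m =>
    have hx' : x = ka c * kmk n (FreeMonoid.ofList m) := by
      rw [← hl, FreeMonoid.ofList_cons, map_mul, kmk_of]
    rcases hp _ _ hx' with h1 | h2
    · exact ⟨c, h1.symm⟩
    · exfalso
      have hmem : m.length ∈ S := ⟨m, h2, rfl⟩
      have hle := Nat.sInf_le hmem
      have : m.length + 1 = sInf S := by simpa using hlen
      omega

/-! #### A separating representation -/

def f3 : Function.End (Fin 3) := ![0, 0, 2]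
def g3 : Function.End (Fin 3) := ![2, 1, 2]

instance : DecidableEq (Function.End (Fin 3)) :=
  inferInstanceAs (DecidableEq (Fin 3 → Fin 3))

def kfun (p : Fin n) : Fin n → Function.End (Fin 3) :=
  fun i => if i ≤ p then f3 else g3

lemma kfun_rel (p : Fin n) : ∀ a b : FreeMonoid (Fin n), KisRel n a b →
    FreeMonoid.lift (kfun p) a = FreeMonoid.lift (kfun p) b := by
  intro a b h
  cases h with
  | idem i =>
    simp only [map_mul, FreeMonoid.lift_eval_of, kfun]
    by_cases hi : i ≤ p <;> simp [hi] <;> decide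
  | braid₁ hlt =>
    rename_i i j
    simp only [map_mul, FreeMonoid.lift_eval_of, kfun]
    by_cases hj : j ≤ p
    · have hi : i ≤ p := (le_of_lt hlt).trans hj
      simp [hi, hj]; decide
    · by_cases hi : i ≤ p <;> simp [hi, hj] <;> decide
  | braid₂ hlt =>
    rename_i i j
    simp only [map_mul, FreeMonoid.lift_eval_of, kfun]
    by_cases hj : j ≤ p
    · have hi : i ≤ p := (le_of_lt hlt).trans hj
      simp [hi, hj]; decide
    · by_cases hi : i ≤ p <;> simp [hi, hj] <;> decide

lemma ka_noncomm {p q : Fin n} (hpq : p < q) : ka p * ka q ≠ ka q * ka p := by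
  intro h
  have h2 := congrArg (PresentedMonoid.lift (kfun p) (kfun_rel p)) h
  rw [map_mul, map_mul] at h2
  have hp : (PresentedMonoid.lift (kfun p) (kfun_rel p)) (ka p) = f3 := by
    show kfun p p = f3
    simp [kfun]
  have hq : (PresentedMonoid.lift (kfun p) (kfun_rel p)) (ka q) = g3 := by
    show kfun p q = g3
    simp [kfun, not_le.2 hpq]
  rw [hp, hq] at h2
  exact absurd h2 (by decide)

/-! #### Extensionality for (anti)multiplicative maps -/

lemma mul_ext {σ₁ σ₂ : Kiselman n → Kiselman n}
    (h1 : ∀ x y, σ₁ (x * y) = σ₁ x * σ₁ y) (h2 : ∀ x y, σ₂ (x * y) = σ₂ x * σ₂ y)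
    (hone : σ₁ 1 = σ₂ 1) (hgen : ∀ i, σ₁ (ka i) = σ₂ (ka i)) : ∀ x, σ₁ x = σ₂ x := by
  have key : ∀ l : List (Fin n), σ₁ (kmk n (.ofList l)) = σ₂ (kmk n (.ofList l)) := by
    intro l
    induction l with
    | nil => rw [FreeMonoid.ofList_nil, map_one]; exact hone
    | cons c m ih =>
      rw [FreeMonoid.ofList_cons, map_mul, kmk_of, h1, h2, ih, hgen]
  intro x
  obtain ⟨w, rfl⟩ := PresentedMonoid.surjective_mk (rels := KisRel n) x
  exact key (FreeMonoid.toList w)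

lemma anti_ext {τ₁ τ₂ : Kiselman n → Kiselman n}
    (h1 : ∀ x y, τ₁ (x * y) = τ₁ y * τ₁ x) (h2 : ∀ x y, τ₂ (x * y) = τ₂ y * τ₂ x)
    (hone : τ₁ 1 = τ₂ 1) (hgen : ∀ i, τ₁ (ka i) = τ₂ (ka i)) : ∀ x, τ₁ x = τ₂ x := by
  have key : ∀ l : List (Fin n), τ₁ (kmk n (.ofList l)) = τ₂ (kmk n (.ofList l)) := by
    intro l
    induction l with
    | nil => rw [FreeMonoid.ofList_nil, map_one]; exact hone
    | cons c m ih =>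
      rw [FreeMonoid.ofList_cons, map_mul, kmk_of, h1, h2, ih, hgen]
  intro x
  obtain ⟨w, rfl⟩ := PresentedMonoid.surjective_mk (rels := KisRel n) x
  exact key (FreeMonoid.toList w)

/-! #### Anti-automorphisms send generators to generators -/

lemma anti_one {τ : Kiselman n → Kiselman n} (hb : Function.Bijective τ)
    (h : ∀ x y, τ (x * y) = τ y * τ x) : τ 1 = 1 := by
  obtain ⟨z, hz⟩ := hb.2 1
  have h1 : τ z * τ 1 = τ z := by rw [← h, one_mul]
  rwa [hz, one_mul] at h1

lemma anti_gen {τ : Kiselman n → Kiselman n} (hb : Function.Bijective τ)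
    (h : ∀ x y, τ (x * y) = τ y * τ x) (i : Fin n) : IsGen (τ (ka i)) := by
  apply isGen_of_prop
  · intro h0
    exact ka_ne_one i (hb.1 (h0.trans (anti_one hb h).symm))
  · intro u v huv
    obtain ⟨u', rfl⟩ := hb.2 u
    obtain ⟨v', rfl⟩ := hb.2 v
    have h2 : ka i = v' * u' := hb.1 (by rw [h]; exact huv)
    rcases gen_decomp h2 with h3 | h4
    · right; rw [h3]
    · left; rw [h4]

lemma auto_gen {σ : Kiselman n → Kiselman n} (hb : Function.Bijective σ)
    (h : ∀ x y, σ (x * y) = σ x * σ y) (hone : σ 1 = 1) (i : Fin n) : IsGen (σ (ka i)) := by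
  apply isGen_of_prop
  · intro h0
    exact ka_ne_one i (hb.1 (h0.trans hone.symm))
  · intro u v huv
    obtain ⟨u', rfl⟩ := hb.2 u
    obtain ⟨v', rfl⟩ := hb.2 v
    have h2 : ka i = u' * v' := hb.1 (by rw [h]; exact huv)
    rcases gen_decomp h2 with h3 | h4
    · left; rw [h3]
    · right; rw [h4]

/-! #### Any anti-automorphism reverses the generators -/

lemma anti_ka {τ : Kiselman n → Kiselman n} (hb : Function.Bijective τ)
    (h : ∀ x y, τ (x * y) = τ y * τ x) : ∀ i : Fin n, τ (ka i) = ka i.rev := by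
  choose π hπ using fun i => anti_gen hb h i
  have hinj : Function.Injective π := by
    intro i j hij
    apply ka_inj
    apply hb.1
    rw [hπ i, hπ j, hij]
  have hanti : ∀ i j : Fin n, i < j → π j < π i := by
    intro i j hij
    have h1 : τ (ka i * ka j * ka i) = τ (ka j * ka i) := congrArg τ (ka_braid₁ hij)
    rw [h, h, h, hπ, hπ] at h1
    -- h1 : ka (π i) * (ka (π j) * ka (π i)) = ka (π i) * ka (π j)
    have h1' : ka (π i) * ka (π j) * ka (π i) = ka (π i) * ka (π j) := by
      rw [mul_assoc]; exact h1
    rcases lt_trichotomy (π i) (π j) with hlt | heq | hgt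
    · exfalso
      have h2 := ka_braid₁ hlt
      rw [h1'] at h2
      exact ka_noncomm hlt h2
    · exact absurd (hinj heq) (ne_of_lt hij)
    · exact hgt
  -- rev ∘ π is strictly monotone and bijective, hence the identity
  have hmono : StrictMono (fun i => (π i).rev) := by
    intro i j hij
    exact (Fin.rev_lt_rev).2 (hanti i j hij)
  have hbij : Function.Bijective (fun i => (π i).rev) :=
    (Finite.injective_iff_bijective).1 (fun i j hij => hinj (Fin.rev_injective hij))
  have hid : (fun i => (π i).rev) = id := by
    haveI : WellFoundedLT (Fin n) := inferInstance
    have hri := StrictMono.range_inj (f := fun i => (π i).rev)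
      (g := (id : Fin n → Fin n)) hmono strictMono_id
    exact hri.1 (by rw [Set.range_id]; exact Set.range_eq_univ.2 hbij.2)
  intro i
  rw [hπ i]
  have h4 := congrFun hid i
  simp only [id_eq] at h4
  have h5 : π i = i.rev := by
    apply Fin.rev_injective
    rw [h4, Fin.rev_rev]
  rw [h5]

/-! #### Construction of the canonical anti-automorphism -/

lemma tau_rel : ∀ a b : FreeMonoid (Fin n), KisRel n a b →
    FreeMonoid.lift (fun i : Fin n => MulOpposite.op (ka i.rev)) a =
    FreeMonoid.lift (fun i : Fin n => MulOpposite.op (ka i.rev)) b := by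
  intro a b h
  cases h with
  | idem i =>
    simp only [map_mul, FreeMonoid.lift_eval_of, ← MulOpposite.op_mul]
    rw [ka_idem]
  | braid₁ hlt =>
    rename_i i j
    have hrev : j.rev < i.rev := (Fin.rev_lt_rev).2 hlt
    simp only [map_mul, FreeMonoid.lift_eval_of, ← MulOpposite.op_mul]
    apply congrArg MulOpposite.op
    rw [← mul_assoc]
    exact ka_braid₂ hrev
  | braid₂ hlt =>
    rename_i i j
    have hrev : j.rev < i.rev := (Fin.rev_lt_rev).2 hlt
    simp only [map_mul, FreeMonoid.lift_eval_of, ← MulOpposite.op_mul]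
    apply congrArg MulOpposite.op
    rw [← mul_assoc]
    exact ka_braid₁ hrev

def tau0 : Kiselman n → Kiselman n :=
  fun x => (PresentedMonoid.lift (fun i : Fin n => MulOpposite.op (ka i.rev)) tau_rel x).unop

lemma tau0_anti (x y : Kiselman n) : tau0 (x * y) = tau0 y * tau0 x := by
  simp [tau0, map_mul]

lemma tau0_ka (i : Fin n) : tau0 (ka i) = ka i.rev := rfl

lemma tau0_one : tau0 (1 : Kiselman n) = 1 := by
  simp [tau0]

lemma tau0_invol (x : Kiselman n) : tau0 (tau0 x) = x := by
  have := mul_ext (σ₁ := fun z : Kiselman n => tau0 (tau0 z)) (σ₂ := fun z => z)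
    (fun a b => by simp only [tau0_anti]) (fun a b => rfl)
    (by show tau0 (tau0 1) = (1 : Kiselman n); rw [tau0_one, tau0_one])
    (fun i => by show tau0 (tau0 (ka i)) = ka i; rw [tau0_ka, tau0_ka, Fin.rev_rev]) x
  simpa using this

lemma tau0_bij : Function.Bijective (tau0 : Kiselman n → Kiselman n) :=
  Function.Involutive.bijective tau0_invol

end KisAux

open KisAux in
/-- Proposition 3: the only automorphism of `K_n` is the identity; `K_n` has a unique
anti-automorphism, and it sends `aᵢ` to `a_{n-i+1}`. -/
theorem kiselman_automorphisms (n : ℕ) :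
    (∀ σ : Kiselman n ≃* Kiselman n, ∀ x : Kiselman n, σ x = x) ∧
    (∃! τ : Kiselman n → Kiselman n,
      Function.Bijective τ ∧ ∀ x y : Kiselman n, τ (x * y) = τ y * τ x) ∧
    (∀ τ : Kiselman n → Kiselman n, Function.Bijective τ →
      (∀ x y : Kiselman n, τ (x * y) = τ y * τ x) →
      ∀ i : Fin n, τ (ka i) = ka i.rev) := by
  refine ⟨?_, ?_, ?_⟩
  · -- automorphisms are trivial
    intro σ
    have hb : Function.Bijective σ := σ.bijective
    have hmul : ∀ x y : Kiselman n, σ (x * y) = σ x * σ y := map_mul σ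
    have hone : σ (1 : Kiselman n) = 1 := map_one σ
    choose π hπ using fun i => auto_gen hb hmul hone i
    have hinj : Function.Injective π := by
      intro i j hij
      apply ka_inj
      apply hb.1
      rw [hπ i, hπ j, hij]
    have hmono : StrictMono π := by
      intro i j hij
      have h1 : σ (ka i * ka j * ka i) = σ (ka j * ka i) := congrArg σ (ka_braid₁ hij)
      rw [hmul, hmul, hmul, hπ, hπ] at h1
      -- h1 : ka (π i) * ka (π j) * ka (π i) = ka (π j) * ka (π i)
      rcases lt_trichotomy (π i) (π j) with hlt | heq | hgt
      · exact hlt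
      · exact absurd (hinj heq) (ne_of_lt hij)
      · exfalso
        have h2 := ka_braid₂ hgt
        rw [h1] at h2
        exact ka_noncomm hgt h2
    have hbijπ : Function.Bijective π := (Finite.injective_iff_bijective).1 hinj
    have hid : π = id := by
      haveI : WellFoundedLT (Fin n) := inferInstance
      have hri := StrictMono.range_inj (f := π) (g := (id : Fin n → Fin n))
        hmono strictMono_id
      exact hri.1 (by rw [Set.range_id]; exact Set.range_eq_univ.2 hbijπ.2)
    have hgen : ∀ i, σ (ka i) = ka i := by
      intro i
      rw [hπ i, hid]; rfl
    exact mul_ext hmul (fun _ _ => rfl) (by simp [hone]) hgen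
  · -- unique anti-automorphism
    refine ⟨tau0, ⟨tau0_bij, tau0_anti⟩, ?_⟩
    intro τ ⟨hb, h⟩
    funext x
    refine anti_ext h tau0_anti ?_ ?_ x
    · rw [anti_one hb h, tau0_one]
    · intro i
      rw [anti_ka hb h i, tau0_ka]
  · intro τ hb h i
    exact anti_ka hb h i
end
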